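/- In the flip graph of outer planar triangulations of the odd n-gon, every triangulation has a unique 'central triangle': a triangle Δ such that each of the three arcs of the polygon boundary determined by the vertices of Δ contains fewer than n/2 edges. -/

import Mathlib

set_option maxHeartbeats 2000000


/-- An outer planar triangulation of the based, oriented convex `n`-gon
(vertices `0, …, n−1` in order, no interior vertices), encoded as its set of
`n − 3` pairwise non-crossing diagonals. -/
def IsOPT (n : ℕ) (T : Finset (Fin n × Fin n)) : Prop :=
  (∀ p ∈ T, p.1 < p.2 ∧ p.1.val + 2 ≤ p.2.val ∧ ¬(p.1.val = 0 ∧ p.2.val = n - 1)) ∧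
  (∀ p ∈ T, ∀ q ∈ T,
    ¬((p.1.val < q.1.val ∧ q.1.val < p.2.val ∧ p.2.val < q.2.val) ∨
      (q.1.val < p.1.val ∧ p.1.val < q.2.val ∧ q.2.val < p.2.val))) ∧
  T.card = n - 3

/-- `a` and `b` (with `a < b`) are joined by an edge of the triangulated polygon:
either a boundary edge of the polygon or a diagonal of `T`. -/
def polyEdge (n : ℕ) (T : Finset (Fin n × Fin n)) (a b : Fin n) : Prop :=
  a.val + 1 = b.val ∨ (a.val = 0 ∧ b.val = n - 1) ∨ (a, b) ∈ T

/-- The chord from `a` to `b` (as positions, `a < b`) is not crossed by any diagonal of `T`. -/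
def Good (n : ℕ) (T : Finset (Fin n × Fin n)) (a b : ℕ) : Prop :=
  ∀ p ∈ T, ¬((p.1.val < a ∧ a < p.2.val ∧ p.2.val < b) ∨
      (a < p.1.val ∧ p.1.val < b ∧ b < p.2.val))

/-- Contraction map collapsing the open interval `(a,b)`. -/
def ctr (a b v : ℕ) : ℕ := if v ≤ a then v else v - (b - a - 1)

lemma ctr_spec (a b : ℕ) (hab : a + 2 ≤ b) :
    ∀ u, u ≤ a ∨ b ≤ u → (u ≤ a ∧ ctr a b u = u) ∨ (b ≤ u ∧ ctr a b u + b = u + a + 1) := by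
  intro u hu
  by_cases h : u ≤ a
  · exact Or.inl ⟨h, if_pos h⟩
  · refine Or.inr ⟨by omega, ?_⟩
    unfold ctr
    rw [if_neg h]
    omega

/-- Any family of pairwise noncrossing nondegenerate diagonals of the `n`-gon has
at most `n - 3` elements. -/
lemma noncross_card_le : ∀ (n : ℕ) (S : Finset (ℕ × ℕ)),
    (∀ p ∈ S, p.1 + 2 ≤ p.2 ∧ p.2 + 1 ≤ n ∧ ¬(p.1 = 0 ∧ p.2 = n - 1)) →
    (∀ p ∈ S, ∀ q ∈ S,
      ¬((p.1 < q.1 ∧ q.1 < p.2 ∧ p.2 < q.2) ∨ (q.1 < p.1 ∧ p.1 < q.2 ∧ q.2 < p.2))) →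
    S.card ≤ n - 3 := by
  intro n
  induction n using Nat.strong_induction_on with
  | _ n IH =>
    intro S h1 h2
    rcases S.eq_empty_or_nonempty with rfl | hne
    · simp
    obtain ⟨ab, habS, hmin⟩ := S.exists_min_image (fun p => p.2 - p.1) hne
    obtain ⟨a, b⟩ := ab
    obtain ⟨hgap, hble, hnw⟩ := h1 _ habS
    dsimp only at hgap hble hnw
    have hn4 : 4 ≤ n := by omega
    have hall : ∀ p ∈ S, p ≠ (a, b) → (p.1 ≤ a ∨ b ≤ p.1) ∧ (p.2 ≤ a ∨ b ≤ p.2) := by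
      intro p hp hne'
      have hmp : b - a ≤ p.2 - p.1 := hmin p hp
      have hcr := h2 p hp (a, b) habS
      have hcr2 := h2 (a, b) habS p hp
      obtain ⟨hg', hb', _⟩ := h1 p hp
      dsimp only at hcr hcr2
      have hne2 : ¬(p.1 = a ∧ p.2 = b) := fun h => hne' (Prod.ext_iff.mpr h)
      omega
    have hfd := ctr_spec a b hgap
    have hinj : Set.InjOn (fun p : ℕ × ℕ => (ctr a b p.1, ctr a b p.2)) (S.erase (a, b)) := by
      intro p hp q hq he
      have hp' := hall p (Finset.mem_of_mem_erase hp) (Finset.ne_of_mem_erase hp)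
      have hq' := hall q (Finset.mem_of_mem_erase hq) (Finset.ne_of_mem_erase hq)
      have e1 : ctr a b p.1 = ctr a b q.1 := congrArg Prod.fst he
      have e2 : ctr a b p.2 = ctr a b q.2 := congrArg Prod.snd he
      have d1 := hfd p.1 hp'.1
      have d2 := hfd p.2 hp'.2
      have d3 := hfd q.1 hq'.1
      have d4 := hfd q.2 hq'.2
      have : p.1 = q.1 ∧ p.2 = q.2 := by omega
      exact Prod.ext_iff.mpr this
    set S' := (S.erase (a, b)).image (fun p : ℕ × ℕ => (ctr a b p.1, ctr a b p.2)) with hS'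
    have hcard' : S'.card + 1 = S.card := by
      rw [hS', Finset.card_image_of_injOn hinj, Finset.card_erase_of_mem habS]
      have : 1 ≤ S.card := Finset.card_pos.mpr hne
      omega
    have h1' : ∀ p ∈ S',
        p.1 + 2 ≤ p.2 ∧ p.2 + 1 ≤ n - (b - a - 1) ∧ ¬(p.1 = 0 ∧ p.2 = n - (b - a - 1) - 1) := by
      intro p hp
      obtain ⟨q, hq, rfl⟩ := Finset.mem_image.mp hp
      have hqS := Finset.mem_of_mem_erase hq
      have hall' := hall q hqS (Finset.ne_of_mem_erase hq)
      obtain ⟨hg', hb', hnw'⟩ := h1 q hqS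
      have hne2 : ¬(q.1 = a ∧ q.2 = b) := fun h => (Finset.ne_of_mem_erase hq) (Prod.ext_iff.mpr h)
      have d1 := hfd q.1 hall'.1
      have d2 := hfd q.2 hall'.2
      dsimp only
      omega
    have h2' : ∀ p ∈ S', ∀ q ∈ S',
        ¬((p.1 < q.1 ∧ q.1 < p.2 ∧ p.2 < q.2) ∨ (q.1 < p.1 ∧ p.1 < q.2 ∧ q.2 < p.2)) := by
      intro p hp q hq
      obtain ⟨p', hp', rfl⟩ := Finset.mem_image.mp hp
      obtain ⟨q', hq', rfl⟩ := Finset.mem_image.mp hq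
      have hps := Finset.mem_of_mem_erase hp'
      have hqs := Finset.mem_of_mem_erase hq'
      have hap := hall p' hps (Finset.ne_of_mem_erase hp')
      have haq := hall q' hqs (Finset.ne_of_mem_erase hq')
      have hcr := h2 p' hps q' hqs
      have d1 := hfd p'.1 hap.1
      have d2 := hfd p'.2 hap.2
      have d3 := hfd q'.1 haq.1
      have d4 := hfd q'.2 haq.2
      dsimp only
      omega
    have hlt : n - (b - a - 1) < n := by omega
    have hIH := IH (n - (b - a - 1)) hlt S' h1' h2'
    omega

/-- A good (uncrossed) nondegenerate chord of a triangulated polygon is a diagonal. -/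
lemma good_mem {n : ℕ} {T : Finset (Fin n × Fin n)} (hn : 3 ≤ n) (hT : IsOPT n T)
    {a b : Fin n} (hgap : a.val + 2 ≤ b.val) (hnw : ¬(a.val = 0 ∧ b.val = n - 1))
    (hg : Good n T a.val b.val) : (a, b) ∈ T := by
  by_contra hmem
  have hinj : Function.Injective (fun p : Fin n × Fin n => (p.1.val, p.2.val)) := by
    intro p q h
    have h1 : p.1.val = q.1.val := congrArg Prod.fst h
    have h2 : p.2.val = q.2.val := congrArg Prod.snd h
    exact Prod.ext_iff.mpr ⟨Fin.ext h1, Fin.ext h2⟩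
  have hb1 : ∀ p ∈ (insert (a, b) T).image (fun p : Fin n × Fin n => (p.1.val, p.2.val)),
      p.1 + 2 ≤ p.2 ∧ p.2 + 1 ≤ n ∧ ¬(p.1 = 0 ∧ p.2 = n - 1) := by
    intro p hp
    obtain ⟨q, hq, rfl⟩ := Finset.mem_image.mp hp
    dsimp only
    rcases Finset.mem_insert.mp hq with rfl | hq'
    · exact ⟨hgap, b.isLt, hnw⟩
    · obtain ⟨_, h2, h3⟩ := hT.1 q hq'
      exact ⟨h2, q.2.isLt, h3⟩
  have hb2 : ∀ p ∈ (insert (a, b) T).image (fun p : Fin n × Fin n => (p.1.val, p.2.val)),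
      ∀ q ∈ (insert (a, b) T).image (fun p : Fin n × Fin n => (p.1.val, p.2.val)),
      ¬((p.1 < q.1 ∧ q.1 < p.2 ∧ p.2 < q.2) ∨ (q.1 < p.1 ∧ p.1 < q.2 ∧ q.2 < p.2)) := by
    intro p hp q hq
    obtain ⟨p', hp', rfl⟩ := Finset.mem_image.mp hp
    obtain ⟨q', hq', rfl⟩ := Finset.mem_image.mp hq
    dsimp only
    rcases Finset.mem_insert.mp hp' with rfl | hp'' <;>
      rcases Finset.mem_insert.mp hq' with rfl | hq''
    · dsimp only; omega
    · have := hg q' hq''; dsimp only; omega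
    · have := hg p' hp''; dsimp only; omega
    · exact hT.2.1 p' hp'' q' hq''
  have hcard := noncross_card_le n _ hb1 hb2
  rw [Finset.card_image_of_injective _ hinj, Finset.card_insert_of_notMem hmem, hT.2.2] at hcard
  omega

lemma polyEdge_good {n : ℕ} {T : Finset (Fin n × Fin n)} (hT : IsOPT n T)
    {a b : Fin n} (he : polyEdge n T a b) : Good n T a.val b.val := by
  intro p hp
  rcases he with h | h | h
  · omega
  · have := p.2.isLt; omega
  · have h2 := hT.2.1 p hp (a, b) h
    dsimp only at h2
    omega

lemma good_polyEdge {n : ℕ} {T : Finset (Fin n × Fin n)} (hn : 3 ≤ n) (hT : IsOPT n T)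
    {a b : Fin n} (hab : a.val < b.val) (hg : Good n T a.val b.val) : polyEdge n T a b := by
  by_cases h1 : a.val + 1 = b.val
  · exact Or.inl h1
  by_cases h2 : a.val = 0 ∧ b.val = n - 1
  · exact Or.inr (Or.inl h2)
  · exact Or.inr (Or.inr (good_mem hn hT (by omega) h2 hg))

lemma polyEdge_notcross {n : ℕ} {T : Finset (Fin n × Fin n)} (hT : IsOPT n T)
    {a b x y : Fin n} (he : polyEdge n T a b) (hg : Good n T x.val y.val) :
    ¬((a.val < x.val ∧ x.val < b.val ∧ b.val < y.val) ∨
      (x.val < a.val ∧ a.val < y.val ∧ y.val < b.val)) := by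
  rcases he with h | h | h
  · omega
  · have := y.isLt; omega
  · have h2 := hg (a, b) h
    dsimp only at h2
    omega

/-- Any good chord with a nontrivial inside has an apex on the inside. -/
lemma apex_lemma {n : ℕ} {T : Finset (Fin n × Fin n)} (hT : IsOPT n T) {a b : ℕ}
    (hgap : a + 2 ≤ b) (hg : Good n T a b) :
    ∃ c, a < c ∧ c < b ∧ Good n T a c ∧ Good n T c b := by
  classical
  have hex : ∃ c, a < c ∧ c < b ∧ Good n T c b :=
    ⟨b - 1, by omega, by omega, fun p hp => by omega⟩
  refine ⟨Nat.find hex, (Nat.find_spec hex).1, (Nat.find_spec hex).2.1, ?_,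
    (Nat.find_spec hex).2.2⟩
  have hac := (Nat.find_spec hex).1
  have hcb := (Nat.find_spec hex).2.1
  have hgcb := (Nat.find_spec hex).2.2
  intro p hp hcr
  have hgp := hg p hp
  rcases hcr with ⟨h1, h2, h3⟩ | ⟨h1, h2, h3⟩
  · exact hgp (Or.inl ⟨h1, h2, by omega⟩)
  · rcases lt_trichotomy p.2.val b with hlt | heq | hgt
    · exact hgcb p hp (Or.inl ⟨h2, h3, hlt⟩)
    · have hPp1 : Good n T p.1.val b := by
        intro q hq hcq
        rcases hcq with ⟨g1, g2, g3⟩ | ⟨g1, g2, g3⟩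
        · exact hT.2.1 q hq p hp (Or.inl ⟨g1, g2, by omega⟩)
        · exact hg q hq (Or.inr ⟨by omega, g2, g3⟩)
      exact Nat.find_min hex h2 ⟨h1, by omega, hPp1⟩
    · exact hgp (Or.inr ⟨h1, by omega, by omega⟩)

lemma uniq_arith (n m a b c x y z : ℕ)
    (hm : n = 2*m+1) (hn : 3 ≤ n)
    (hac : a < c) (hcb : c < b) (hbn : b < n)
    (hxy : x < y) (hyz : y < z) (hzn : z < n)
    (hbig : n < 2*(b-a)) (hca : 2*(c-a) < n) (hbc : 2*(b-c) < n) (hwr : 2*(n-b+a) < n)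
    (w1 : 2*(y-x) < n) (w2 : 2*(z-y) < n) (w3 : 2*(n-z+x) < n)
    (N1 : ¬((a < x ∧ x < c ∧ c < y) ∨ (x < a ∧ a < y ∧ y < c)))
    (N2 : ¬((a < y ∧ y < c ∧ c < z) ∨ (y < a ∧ a < z ∧ z < c)))
    (N3 : ¬((a < x ∧ x < c ∧ c < z) ∨ (x < a ∧ a < z ∧ z < c)))
    (N4 : ¬((c < x ∧ x < b ∧ b < y) ∨ (x < c ∧ c < y ∧ y < b)))
    (N5 : ¬((c < y ∧ y < b ∧ b < z) ∨ (y < c ∧ c < z ∧ z < b)))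
    (N6 : ¬((c < x ∧ x < b ∧ b < z) ∨ (x < c ∧ c < z ∧ z < b)))
    (N7 : ¬((a < x ∧ x < b ∧ b < y) ∨ (x < a ∧ a < y ∧ y < b)))
    (N8 : ¬((a < y ∧ y < b ∧ b < z) ∨ (y < a ∧ a < z ∧ z < b)))
    (N9 : ¬((a < x ∧ x < b ∧ b < z) ∨ (x < a ∧ a < z ∧ z < b))) :
    x = a ∧ y = c ∧ z = b := by
  by_cases hxa : x < a
  · have hy3 : y ≤ a ∨ b ≤ y := by clear N1 N2 N3 N4 N5 N6 N8 N9; omega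
    have hz3 : z ≤ a ∨ b ≤ z := by clear N1 N2 N3 N4 N5 N6 N7 N8; omega
    exfalso; clear N1 N2 N3 N4 N5 N6 N7 N8 N9; omega
  by_cases hzb : b < z
  · have hx3 : x ≤ a ∨ b ≤ x := by clear N1 N2 N3 N4 N5 N6 N7 N8; omega
    have hy3 : y ≤ a ∨ b ≤ y := by clear N1 N2 N3 N4 N5 N6 N7 N9; omega
    exfalso; clear N1 N2 N3 N4 N5 N6 N7 N8 N9; omega
  by_cases hzc : z ≤ c
  · exfalso; clear N1 N2 N3 N4 N5 N6 N7 N8 N9; omega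
  by_cases hxc : c ≤ x
  · exfalso; clear N1 N2 N3 N4 N5 N6 N7 N8 N9; omega
  have hxa' : x = a := by clear N1 N2 N4 N5 N6 N7 N8 N9; omega
  have hzb' : z = b := by clear N1 N2 N3 N4 N5 N7 N8 N9; omega
  have hyc' : y = c := by clear N1 N3 N5 N6 N7 N8 N9; omega
  exact ⟨hxa', hyc', hzb'⟩

/-- For `n` odd, every outer planar triangulation of the `n`-gon has a unique
central triangle: a triangle each of whose three boundary arcs contains fewer
than `n/2` polygon edges. -/
theorem exists_unique_central_triangle (n : ℕ) (hn : 3 ≤ n) (hodd : Odd n)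
    (T : Finset (Fin n × Fin n)) (hT : IsOPT n T) :
    ∃! t : Fin n × Fin n × Fin n,
      t.1 < t.2.1 ∧ t.2.1 < t.2.2 ∧
      polyEdge n T t.1 t.2.1 ∧ polyEdge n T t.2.1 t.2.2 ∧ polyEdge n T t.1 t.2.2 ∧
      2 * (t.2.1.val - t.1.val) < n ∧
      2 * (t.2.2.val - t.2.1.val) < n ∧
      2 * (n - t.2.2.val + t.1.val) < n := by
  classical
  obtain ⟨m, hm⟩ := hodd
  have hex : ∃ k, ∃ a b : ℕ, a < b ∧ b + 1 ≤ n ∧ Good n T a b ∧ n < 2 * (b - a) ∧ b - a = k :=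
    ⟨n - 1, 0, n - 1, by omega, by omega,
      fun p hp => by have := p.2.isLt; omega, by omega, rfl⟩
  obtain ⟨a, b, hab, hbn, hgab, hbig, hk⟩ := Nat.find_spec hex
  have hgap : a + 2 ≤ b := by omega
  obtain ⟨c, hac, hcb, hgac, hgcb⟩ := apex_lemma hT hgap hgab
  have hca : 2 * (c - a) < n := by
    by_contra h
    exact Nat.find_min hex (show c - a < Nat.find hex by omega)
      ⟨a, c, hac, by omega, hgac, by omega, rfl⟩
  have hbc : 2 * (b - c) < n := by
    by_contra h
    exact Nat.find_min hex (show b - c < Nat.find hex by omega)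
      ⟨c, b, hcb, hbn, hgcb, by omega, rfl⟩
  have hwr : 2 * (n - b + a) < n := by omega
  have han : a < n := by omega
  have hcn : c < n := by omega
  have hbn' : b < n := by omega
  have eAC : polyEdge n T ⟨a, han⟩ ⟨c, hcn⟩ := good_polyEdge hn hT hac hgac
  have eCB : polyEdge n T ⟨c, hcn⟩ ⟨b, hbn'⟩ := good_polyEdge hn hT hcb hgcb
  have eAB : polyEdge n T ⟨a, han⟩ ⟨b, hbn'⟩ := good_polyEdge hn hT hab hgab
  refine ⟨(⟨a, han⟩, ⟨c, hcn⟩, ⟨b, hbn'⟩),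
    ⟨Fin.mk_lt_mk.mpr hac, Fin.mk_lt_mk.mpr hcb, eAC, eCB, eAB, ?_, ?_, ?_⟩, ?_⟩
  · exact hca
  · exact hbc
  · exact hwr
  rintro ⟨x, y, z⟩ ⟨hxy, hyz, exy, eyz, exz, w1, w2, w3⟩
  have hxy' : x.val < y.val := hxy
  have hyz' : y.val < z.val := hyz
  have gxy := polyEdge_good hT exy
  have gyz := polyEdge_good hT eyz
  have gxz := polyEdge_good hT exz
  have N1 := polyEdge_notcross hT eAC gxy
  have N2 := polyEdge_notcross hT eAC gyz
  have N3 := polyEdge_notcross hT eAC gxz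
  have N4 := polyEdge_notcross hT eCB gxy
  have N5 := polyEdge_notcross hT eCB gyz
  have N6 := polyEdge_notcross hT eCB gxz
  have N7 := polyEdge_notcross hT eAB gxy
  have N8 := polyEdge_notcross hT eAB gyz
  have N9 := polyEdge_notcross hT eAB gxz
  have hA : (⟨a, han⟩ : Fin n).val = a := rfl
  have hC : (⟨c, hcn⟩ : Fin n).val = c := rfl
  have hB : (⟨b, hbn'⟩ : Fin n).val = b := rfl
  have hzn := z.isLt
  have hyn := y.isLt
  have hxn := x.isLt
  simp only [hA, hC, hB] at N1 N2 N3 N4 N5 N6 N7 N8 N9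
  dsimp only at w1 w2 w3
  have hvals : x.val = a ∧ y.val = c ∧ z.val = b :=
    uniq_arith n m a b c x.val y.val z.val hm hn hac hcb hbn' hxy' hyz' hzn hbig hca hbc hwr
      w1 w2 w3 N1 N2 N3 N4 N5 N6 N7 N8 N9
  exact Prod.ext_iff.mpr ⟨Fin.ext hvals.1,
    Prod.ext_iff.mpr ⟨Fin.ext hvals.2.1, Fin.ext hvals.2.2⟩⟩
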